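/- For β < 0, θ > 0, and x₀ ≥ 0, the function x_F(t) = (√(-2β)/θ) · [(√(-2β)+θx₀)(1-e^{-√(-2β)θt}) + 2θx₀ e^{-√(-2β)θt}] / [(√(-2β)+θx₀)(1-e^{-√(-2β)θt}) + 2√(-2β) e^{-√(-2β)θt}] satisfies the ODE x'(t) = -β - (θ²/2)x(t)² with x(0) = x₀, for all t ≥ 0. -/

import Mathlib

open Real

theorem fluid_solution_neg_beta (β θ x₀ : ℝ) (hβ : β < 0) (hθ : 0 < θ) (hx₀ : 0 ≤ x₀)
    (xF : ℝ → ℝ)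
    (hxF : ∀ t : ℝ,
      xF t = (Real.sqrt (-2 * β) / θ) *
        (((Real.sqrt (-2 * β) + θ * x₀) * (1 - Real.exp (-(Real.sqrt (-2 * β)) * θ * t))
            + 2 * θ * x₀ * Real.exp (-(Real.sqrt (-2 * β)) * θ * t)) /
          ((Real.sqrt (-2 * β) + θ * x₀) * (1 - Real.exp (-(Real.sqrt (-2 * β)) * θ * t))
            + 2 * Real.sqrt (-2 * β) * Real.exp (-(Real.sqrt (-2 * β)) * θ * t)))) :
    xF 0 = x₀ ∧ ∀ t : ℝ, 0 ≤ t →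
      HasDerivAt xF (-β - θ ^ 2 / 2 * (xF t) ^ 2) t := by
  have hfun : xF = fun t : ℝ =>
      (Real.sqrt (-2 * β) / θ) *
        (((Real.sqrt (-2 * β) + θ * x₀) * (1 - Real.exp (-(Real.sqrt (-2 * β)) * θ * t))
            + 2 * θ * x₀ * Real.exp (-(Real.sqrt (-2 * β)) * θ * t)) /
          ((Real.sqrt (-2 * β) + θ * x₀) * (1 - Real.exp (-(Real.sqrt (-2 * β)) * θ * t))
            + 2 * Real.sqrt (-2 * β) * Real.exp (-(Real.sqrt (-2 * β)) * θ * t))) :=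
    funext hxF
  subst hfun
  set s := Real.sqrt (-2 * β) with hs_def
  have hs : 0 < s := Real.sqrt_pos.mpr (by linarith)
  have hs2 : s ^ 2 = -2 * β := Real.sq_sqrt (by linarith)
  have hβ' : β = -(s ^ 2) / 2 := by linarith
  constructor
  · simp only [mul_zero, Real.exp_zero]
    field_simp
    ring
  · intro t ht
    -- derivative of the inner linear function
    have h1 : HasDerivAt (fun u : ℝ => -s * θ * u) (-s * θ) t := by
      simpa using (hasDerivAt_id t).const_mul (-s * θ)
    have hE : HasDerivAt (fun u : ℝ => Real.exp (-s * θ * u))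
        (Real.exp (-s * θ * t) * (-s * θ)) t := h1.exp
    have hN : HasDerivAt
        (fun u : ℝ => (s + θ * x₀) * (1 - Real.exp (-s * θ * u))
            + 2 * θ * x₀ * Real.exp (-s * θ * u))
        ((s + θ * x₀) * (0 - Real.exp (-s * θ * t) * (-s * θ))
            + 2 * θ * x₀ * (Real.exp (-s * θ * t) * (-s * θ))) t := by
      exact (((hasDerivAt_const t (1 : ℝ)).sub hE).const_mul (s + θ * x₀)).add
        (hE.const_mul (2 * θ * x₀))
    have hD : HasDerivAt
        (fun u : ℝ => (s + θ * x₀) * (1 - Real.exp (-s * θ * u))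
            + 2 * s * Real.exp (-s * θ * u))
        ((s + θ * x₀) * (0 - Real.exp (-s * θ * t) * (-s * θ))
            + 2 * s * (Real.exp (-s * θ * t) * (-s * θ))) t := by
      exact (((hasDerivAt_const t (1 : ℝ)).sub hE).const_mul (s + θ * x₀)).add
        (hE.const_mul (2 * s))
    have hEpos : 0 < Real.exp (-s * θ * t) := Real.exp_pos _
    have hEle : Real.exp (-s * θ * t) ≤ 1 := by
      apply Real.exp_le_one_iff.mpr
      have : 0 ≤ s * θ * t := by positivity
      nlinarith
    have hD0 : (s + θ * x₀) * (1 - Real.exp (-s * θ * t))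
        + 2 * s * Real.exp (-s * θ * t) ≠ 0 := by
      have h2 : 0 ≤ (s + θ * x₀) * (1 - Real.exp (-s * θ * t)) := by
        apply mul_nonneg; nlinarith; linarith
      nlinarith
    have hQ := ((hN.div hD hD0).const_mul (s / θ))
    refine hQ.congr_deriv ?_
    beta_reduce
    rw [hβ']
    generalize hEq : Real.exp (-s * θ * t) = E at hD0 ⊢
    field_simp [show (s + θ * x₀) * (1 - E) + s * E * 2 ≠ 0 by convert hD0 using 2; ring]
    ring
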